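/- In the binary coordinate-permutation model (k = 2), let n ≥ 2, let 2 ≤ t ≤ n, and let h ∈ S_n be a single cycle of length t (i.e. h is a cycle whose support has cardinality t). Then the transition probability from the identity e to h is Q(e,h) = C(2n−t, n) / (n! · 2^{n−1}), where C(·,·) denotes the binomial coefficient. -/

import Mathlib

open Finset

noncomputable section

variable (n k : ℕ)

/-- Fixed words of `g ∈ S_n` under the coordinate-permutation action on `[k]^n`. -/
def fixedWords (g : Equiv.Perm (Fin n)) : Finset (Fin n → Fin k) :=
  Finset.univ.filter fun x => (fun i => x (g⁻¹ i)) = x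

/-- Stabilizer of a word `x ∈ [k]^n` under the coordinate-permutation action. -/
def stabWord (x : Fin n → Fin k) : Finset (Equiv.Perm (Fin n)) :=
  Finset.univ.filter fun g => (fun i => x (g⁻¹ i)) = x

/-- The dual Burnside kernel for the coordinate-permutation model `S_n ↷ [k]^n`. -/
def Q (g h : Equiv.Perm (Fin n)) : ℝ :=
  ∑ x ∈ fixedWords n k g ∩ fixedWords n k h,
    1 / (((fixedWords n k g).card : ℝ) * ((stabWord n k x).card : ℝ))

/-- Vandermonde-type identity used for the main computation. -/
lemma vandermonde_aux {t n : ℕ} (htn : t ≤ n) :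
    ∑ b ∈ range (n - t + 1), (n - t).choose b * (n.choose (t + b) + n.choose b)
      = 2 * Nat.choose (2 * n - t) n := by
  have h2nt : 2 * n - t = (n - t) + n := by omega
  have e1 : ∑ b ∈ range (n - t + 1), (n - t).choose b * n.choose b
      = ((n - t) + n).choose n := by
    rw [Nat.add_choose_eq,
      Finset.Nat.sum_antidiagonal_eq_sum_range_succ (fun i j => (n - t).choose i * n.choose j)]
    rw [← Finset.sum_subset (Finset.range_subset_range.2 (by omega) :
        range (n - t + 1) ⊆ range (n + 1))]
    · exact Finset.sum_congr rfl fun i hi => by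
        rw [Nat.choose_symm (by simp only [mem_range] at hi; omega)]
    · intro i hi hni
      simp only [mem_range] at hi hni
      rw [Nat.choose_eq_zero_of_lt (by omega), Nat.zero_mul]
  have e2 : ∑ b ∈ range (n - t + 1), (n - t).choose b * n.choose (t + b)
      = ((n - t) + n).choose n := by
    have symm1 : ((n - t) + n).choose n = ((n - t) + n).choose (n - t) := by
      rw [← Nat.choose_symm (by omega : n ≤ (n - t) + n)]
      congr 1; omega
    rw [symm1, Nat.add_choose_eq,
      Finset.Nat.sum_antidiagonal_eq_sum_range_succ (fun i j => (n - t).choose i * n.choose j)]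
    refine Finset.sum_congr rfl fun b hb => ?_
    simp only [mem_range] at hb
    have h1 : n - t - b = n - (t + b) := by omega
    rw [h1, Nat.choose_symm (by omega)]
  calc ∑ b ∈ range (n - t + 1), (n - t).choose b * (n.choose (t + b) + n.choose b)
      = (∑ b ∈ range (n - t + 1), (n - t).choose b * n.choose (t + b))
        + ∑ b ∈ range (n - t + 1), (n - t).choose b * n.choose b := by
        rw [← Finset.sum_add_distrib]; exact Finset.sum_congr rfl fun b _ => by ring
    _ = 2 * Nat.choose (2 * n - t) n := by rw [e1, e2, h2nt]; ring

/-- Summing a function of the number of zeros over all binary words. -/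
lemma sum_fun_two {α : Type*} [Fintype α] [DecidableEq α] (f : ℕ → ℝ) :
    ∑ y : α → Fin 2, f (univ.filter fun a => y a = 0).card
      = ∑ b ∈ range (Fintype.card α + 1), (Fintype.card α).choose b * f b := by
  have hbij : Function.Bijective (fun y : α → Fin 2 => univ.filter fun a => y a = 0) := by
    have hl : Function.LeftInverse (fun s : Finset α => fun a => if a ∈ s then (0 : Fin 2) else 1)
        (fun y : α → Fin 2 => univ.filter fun a => y a = 0) := by
      intro y; funext a
      by_cases hy : y a = 0
      · simp [hy]
      · have : y a = 1 := by omega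
        simp [hy, this]
    have hr : Function.RightInverse (fun s : Finset α => fun a => if a ∈ s then (0 : Fin 2) else 1)
        (fun y : α → Fin 2 => univ.filter fun a => y a = 0) := by
      intro s; ext a
      by_cases hs : a ∈ s <;> simp [hs]
    exact ⟨hl.injective, hr.surjective⟩
  rw [Fintype.sum_bijective _ hbij _ (fun s => f s.card) (fun y => rfl)]
  rw [← Finset.powerset_univ, Finset.sum_powerset_apply_card]
  simp [card_univ, nsmul_eq_mul]

/-- Cardinality of the stabilizer of a binary word. -/
lemma stabWord_card (n : ℕ) (x : Fin n → Fin 2) :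
    (stabWord n 2 x).card
      = ((univ.filter fun i => x i = 0).card).factorial
        * ((n - (univ.filter fun i => x i = 0).card)).factorial := by
  classical
  unfold stabWord
  rw [← Fintype.card_subtype]
  have e : {g : Equiv.Perm (Fin n) // (fun i => x (g⁻¹ i)) = x}
      ≃ {g : Equiv.Perm (Fin n) // x ∘ g = x} :=
    (Equiv.inv (Equiv.Perm (Fin n))).subtypeEquiv (fun g => Iff.rfl)
  rw [Fintype.card_congr e, DomMulAct.stabilizer_card, Fin.prod_univ_two]
  have h0 : Fintype.card {a : Fin n // x a = 0} = (univ.filter fun i => x i = 0).card :=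
    Fintype.card_subtype _
  have h1 : Fintype.card {a : Fin n // x a = 1} = (univ.filter fun i => x i = 1).card :=
    Fintype.card_subtype _
  have hsum : (univ.filter fun i => x i = 0).card + (univ.filter fun i => x i = 1).card = n := by
    have := Finset.card_filter_add_card_filter_not
      (s := (univ : Finset (Fin n))) (p := fun i => x i = 0)
    rw [Finset.card_univ, Fintype.card_fin] at this
    have hfe : (univ.filter fun i => x i = 1) = univ.filter fun i => ¬ x i = 0 :=
      Finset.filter_congr (fun i _ => by constructor <;> (intro h; omega))
    rw [hfe, this]
  rw [h0, h1]
  have : (univ.filter fun i => x i = 1).card = n - (univ.filter fun i => x i = 0).card := by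
    omega
  rw [this]

/-- In the binary coordinate-permutation model (`k = 2`), the transition probability of the dual
Burnside chain from the identity to a single `t`-cycle `h` is
`Q(e,h) = C(2n−t, n) / (n!·2^{n−1})`. -/
theorem binary_identity_to_tcycle (hn : 2 ≤ n) (t : ℕ) (ht2 : 2 ≤ t) (htn : t ≤ n)
    (h : Equiv.Perm (Fin n)) (hcyc : h.IsCycle) (hsupp : h.support.card = t) :
    Q n 2 1 h = (Nat.choose (2 * n - t) n : ℝ) / ((n.factorial : ℝ) * 2 ^ (n - 1)) := by
  classical
  set c0 : (Fin n → Fin 2) → ℕ := fun x => (univ.filter fun i => x i = 0).card with hc0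
  set G : ℕ → ℝ := fun a => 1 / ((2 : ℝ) ^ n * (a.factorial * (n - a).factorial)) with hG
  -- Step 1 : rewrite Q as a sum over words fixed by h
  have hW1 : fixedWords n 2 1 = univ := by
    ext x; simp [fixedWords]
  have hW1card : ((fixedWords n 2 1).card : ℝ) = 2 ^ n := by
    rw [hW1, card_univ]
    simp [Fintype.card_fun]
  have hQ : Q n 2 1 h = ∑ x ∈ fixedWords n 2 h, G (c0 x) := by
    unfold Q
    rw [hW1, Finset.univ_inter, ← hW1]
    refine Finset.sum_congr rfl fun x hx => ?_
    rw [hW1card, stabWord_card n x]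
    push_cast [hG, hc0]
    ring
  -- Step 2 : description of fixed words of h
  have hmem : ∀ x : Fin n → Fin 2, x ∈ fixedWords n 2 h ↔ ∀ i, x (h i) = x i := by
    intro x
    simp only [fixedWords, mem_filter, mem_univ, true_and, funext_iff]
    constructor
    · intro hx i
      have := hx (h i)
      rw [show h⁻¹ (h i) = i from h.symm_apply_apply i] at this
      exact this.symm
    · intro hx i
      have := hx (h⁻¹ i)
      rw [show h (h⁻¹ i) = i from h.apply_symm_apply i] at this
      exact this.symm
  have hpow : ∀ x ∈ fixedWords n 2 h, ∀ (m : ℕ) (i : Fin n), x ((h ^ m) i) = x i := by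
    intro x hx m
    rw [hmem] at hx
    induction m with
    | zero => intro i; simp
    | succ m ih =>
      intro i
      rw [pow_succ, Equiv.Perm.mul_apply, ih (h i), hx i]
  have hconst : ∀ x ∈ fixedWords n 2 h, ∀ i ∈ h.support, ∀ j ∈ h.support, x i = x j := by
    intro x hx i hi j hj
    obtain ⟨m, hm⟩ := hcyc.exists_pow_eq (Equiv.Perm.mem_support.1 hi) (Equiv.Perm.mem_support.1 hj)
    rw [← hm]
    exact (hpow x hx m i).symm
  -- Step 3 : reindex the sum by (value on support, values off support)
  have hne : h.support.Nonempty := Finset.card_pos.mp (by omega)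
  obtain ⟨i₀, hi₀⟩ := hne
  set pack : Fin 2 × ({i : Fin n // i ∉ h.support} → Fin 2) → (Fin n → Fin 2) :=
    fun p i => if hi : i ∈ h.support then p.1 else p.2 ⟨i, hi⟩ with hpack
  have hpack_mem : ∀ p, pack p ∈ fixedWords n 2 h := by
    intro p
    rw [hmem]
    intro i
    by_cases hi : i ∈ h.support
    · have hhi : h i ∈ h.support := Equiv.Perm.apply_mem_support.2 hi
      show (if hj : h i ∈ h.support then p.1 else p.2 ⟨h i, hj⟩)
        = if hj : i ∈ h.support then p.1 else p.2 ⟨i, hj⟩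
      rw [dif_pos hhi, dif_pos hi]
    · rw [Equiv.Perm.notMem_support.mp hi]
  have hleft : ∀ x ∈ fixedWords n 2 h,
      pack (x i₀, fun s => x s.1) = x := by
    intro x hx
    funext i
    by_cases hi : i ∈ h.support
    · show (if hj : i ∈ h.support then x i₀ else x (⟨i, hj⟩ : {i : Fin n // i ∉ h.support}).1) = x i
      rw [dif_pos hi]
      exact hconst x hx i₀ hi₀ i hi
    · show (if hj : i ∈ h.support then x i₀ else x (⟨i, hj⟩ : {i : Fin n // i ∉ h.support}).1) = x i
      rw [dif_neg hi]
  have hright : ∀ p : Fin 2 × ({i : Fin n // i ∉ h.support} → Fin 2),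
      ((pack p i₀, fun s => pack p s.1) : Fin 2 × ({i : Fin n // i ∉ h.support} → Fin 2)) = p := by
    intro p
    refine Prod.ext ?_ ?_
    · show (if hj : i₀ ∈ h.support then p.1 else p.2 ⟨i₀, hj⟩) = p.1
      rw [dif_pos hi₀]
    · funext s
      show (if hj : s.1 ∈ h.support then p.1 else p.2 ⟨s.1, hj⟩) = p.2 s
      rw [dif_neg s.2]
  have hsum1 : ∑ x ∈ fixedWords n 2 h, G (c0 x)
      = ∑ p : Fin 2 × ({i : Fin n // i ∉ h.support} → Fin 2), G (c0 (pack p)) := by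
    refine Finset.sum_nbij' (fun x => ((x i₀, fun s => x s.1) :
        Fin 2 × ({i : Fin n // i ∉ h.support} → Fin 2))) pack
      (fun x hx => Finset.mem_univ _) (fun p _ => hpack_mem p)
      (fun x hx => hleft x hx) (fun p _ => hright p)
      (fun x hx => by rw [hleft x hx])
  -- Step 4 : count zeros of pack p
  have hcount : ∀ p : Fin 2 × ({i : Fin n // i ∉ h.support} → Fin 2),
      c0 (pack p) = (if p.1 = 0 then t else 0) + (univ.filter fun s => p.2 s = 0).card := by
    intro p
    have hsplit : (univ : Finset (Fin n)) = h.support ∪ h.supportᶜ := (Finset.union_compl _).symm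
    show (univ.filter fun i => pack p i = 0).card = _
    rw [hsplit, Finset.filter_union,
      Finset.card_union_of_disjoint (Finset.disjoint_filter_filter disjoint_compl_right)]
    congr 1
    · by_cases hp : p.1 = 0
      · rw [if_pos hp, ← hsupp]
        congr 1
        refine Finset.filter_true_of_mem fun i hi => ?_
        show (if hj : i ∈ h.support then p.1 else p.2 ⟨i, hj⟩) = 0
        rw [dif_pos hi, hp]
      · rw [if_neg hp, Finset.card_eq_zero]
        refine Finset.filter_false_of_mem fun i hi => ?_
        show ¬ (if hj : i ∈ h.support then p.1 else p.2 ⟨i, hj⟩) = 0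
        rw [dif_pos hi]
        exact hp
    · refine Finset.card_bij (fun i hi => (⟨i, by
        have := (Finset.mem_filter.1 hi).1
        simpa using this⟩ : {i : Fin n // i ∉ h.support})) ?_ ?_ ?_
      · intro i hi
        have h2 := (Finset.mem_filter.1 hi).2
        have h1 : i ∉ h.support := by simpa using (Finset.mem_filter.1 hi).1
        simp only [Finset.mem_filter, Finset.mem_univ, true_and]
        have h2' : (if hj : i ∈ h.support then p.1 else p.2 ⟨i, hj⟩) = 0 := h2
        rwa [dif_neg h1] at h2'
      · intro a ha b hb hab
        exact congrArg Subtype.val hab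
      · intro s hs
        refine ⟨s.1, ?_, ?_⟩
        · simp only [Finset.mem_filter, Finset.mem_compl]
          refine ⟨s.2, ?_⟩
          have hv := (Finset.mem_filter.1 hs).2
          show (if hj : s.1 ∈ h.support then p.1 else p.2 ⟨s.1, hj⟩) = 0
          rw [dif_neg s.2]
          exact hv
        · simp
  -- Step 5 : cardinality of the complement type
  have hcardsub : Fintype.card {i : Fin n // i ∉ h.support} = n - t := by
    rw [Fintype.card_subtype]
    have : univ.filter (fun i => i ∉ h.support) = h.supportᶜ := by ext i; simp
    rw [this, Finset.card_compl, Fintype.card_fin, hsupp]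
  -- Step 6 : evaluate the sum
  have hsum2 : ∑ p : Fin 2 × ({i : Fin n // i ∉ h.support} → Fin 2), G (c0 (pack p))
      = ∑ b ∈ range (n - t + 1), ((n - t).choose b : ℝ) * (G (t + b) + G b) := by
    rw [Fintype.sum_prod_type]
    have inner : ∀ c : Fin 2,
        ∑ y : ({i : Fin n // i ∉ h.support} → Fin 2), G (c0 (pack (c, y)))
        = ∑ b ∈ range (n - t + 1),
            ((n - t).choose b : ℝ) * G ((if c = 0 then t else 0) + b) := by
      intro c
      have hs := sum_fun_two (α := {i : Fin n // i ∉ h.support})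
        (fun b => G ((if c = 0 then t else 0) + b))
      rw [hcardsub] at hs
      rw [← hs]
      exact Finset.sum_congr rfl fun y _ => congrArg G (hcount (c, y))
    rw [Finset.sum_congr rfl (fun c _ => inner c), Fin.sum_univ_two]
    rw [← Finset.sum_add_distrib]
    refine Finset.sum_congr rfl fun b _ => ?_
    have e0 : ((if (0 : Fin 2) = 0 then t else 0) + b) = t + b := by simp
    have e1 : ((if (1 : Fin 2) = 0 then t else 0) + b) = b := by simp
    rw [e0, e1]
    ring
  -- Step 7 : identify G with binomial coefficients
  have hGval : ∀ a, a ≤ n → G a = (n.choose a : ℝ) / ((2 : ℝ) ^ n * (n.factorial : ℝ)) := by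
    intro a ha
    have key0 := Nat.choose_mul_factorial_mul_factorial ha
    have key : (n.choose a : ℝ) * ((a.factorial : ℝ) * ((n - a).factorial : ℝ))
        = (n.factorial : ℝ) := by
      have h1 : ((n.choose a * a.factorial * (n - a).factorial : ℕ) : ℝ)
          = ((n.factorial : ℕ) : ℝ) := by exact_mod_cast congrArg (Nat.cast (R := ℝ)) key0
      push_cast at h1
      linear_combination h1
    show (1 : ℝ) / ((2 : ℝ) ^ n * (a.factorial * (n - a).factorial))
      = (n.choose a : ℝ) / ((2 : ℝ) ^ n * (n.factorial : ℝ))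
    rw [div_eq_div_iff (by positivity) (by positivity)]
    linear_combination (-(2 : ℝ) ^ n) * key
  have hfinal : ∑ b ∈ range (n - t + 1), ((n - t).choose b : ℝ) * (G (t + b) + G b)
      = ((2 * Nat.choose (2 * n - t) n : ℕ) : ℝ) / ((2 : ℝ) ^ n * (n.factorial : ℝ)) := by
    have step : ∀ b ∈ range (n - t + 1), ((n - t).choose b : ℝ) * (G (t + b) + G b)
        = (((n - t).choose b * (n.choose (t + b) + n.choose b) : ℕ) : ℝ)
          / ((2 : ℝ) ^ n * (n.factorial : ℝ)) := by
      intro b hb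
      simp only [mem_range] at hb
      rw [hGval (t + b) (by omega), hGval b (by omega)]
      push_cast
      ring
    rw [Finset.sum_congr rfl step, ← Finset.sum_div, ← Nat.cast_sum, vandermonde_aux htn]
  rw [hQ, hsum1, hsum2, hfinal]
  have h2n : (2 : ℝ) ^ n = 2 * 2 ^ (n - 1) := by
    rw [← pow_succ']
    congr 1
    omega
  rw [h2n]
  have hne1 : ((n.factorial : ℝ)) ≠ 0 := by positivity
  have hne2 : ((2 : ℝ) ^ (n - 1)) ≠ 0 := by positivity
  push_cast
  rw [div_eq_div_iff (by positivity) (by positivity)]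
  ring

end
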